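/- Let M := {(2k)² : k ∈ ℕ₀} ∪ {−(2k)² : k ∈ ℕ}. Then M is not an approximate subgroup of ℤ, but Λ := (2ℤ+1) ∪ M is an approximate subgroup of ℤ. Consequently, the intersection of the two approximate subgroups Λ and 2ℤ of ℤ, which equals M, is not an approximate subgroup. -/

import Mathlib

open Pointwise

/-- An approximate subgroup of `(ℤ,+)`. -/
def IsApproxAddSubgroup (A : Set ℤ) : Prop :=
  -A = A ∧ (0 : ℤ) ∈ A ∧ ∃ F : Set ℤ, F.Finite ∧ A + A ⊆ A + F

/-- `M = {(2k)² : k ∈ ℕ₀} ∪ {-(2k)² : k ∈ ℕ}`. -/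
def Mset : Set ℤ :=
  {x : ℤ | ∃ k : ℕ, x = (2 * (k : ℤ)) ^ 2} ∪ {x : ℤ | ∃ k : ℕ, 1 ≤ k ∧ x = -((2 * (k : ℤ)) ^ 2)}

/-- `Λ = (2ℤ+1) ∪ M`. -/
def LamSet : Set ℤ := {x : ℤ | Odd x} ∪ Mset

lemma Mset_neg_mem : ∀ x ∈ Mset, -x ∈ Mset := by
  rintro x (⟨k, rfl⟩ | ⟨k, hk, rfl⟩)
  · rcases Nat.eq_zero_or_pos k with rfl | hk
    · exact Or.inl ⟨0, by norm_num⟩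
    · exact Or.inr ⟨k, hk, rfl⟩
  · exact Or.inl ⟨k, by ring⟩

lemma Mset_even : ∀ x ∈ Mset, Even x := by
  rintro x (⟨k, rfl⟩ | ⟨k, hk, rfl⟩)
  · exact ⟨2 * k ^ 2, by ring⟩
  · exact ⟨-(2 * k ^ 2), by ring⟩

/-- `M` is not an approximate subgroup of `ℤ`, `Λ = (2ℤ+1) ∪ M` is one, and the intersection
of the approximate subgroups `Λ` and `2ℤ` equals `M`, hence is not an approximate subgroup. -/
theorem intersection_not_approx :
    ¬ IsApproxAddSubgroup Mset ∧
    IsApproxAddSubgroup LamSet ∧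
    IsApproxAddSubgroup {x : ℤ | Even x} ∧
    LamSet ∩ {x : ℤ | Even x} = Mset := by
  refine ⟨?_, ?_, ?_, ?_⟩
  · -- Mset is not an approximate subgroup
    rintro ⟨hneg, h0, F, hF, hsub⟩
    obtain ⟨a, ha⟩ := hF.bddAbove
    obtain ⟨b, hb⟩ := hF.bddBelow
    set C : ℤ := max a (-b) with hC
    have hFC : ∀ f ∈ F, -C ≤ f ∧ f ≤ C := by
      intro f hf
      have h1 := ha hf
      have h2 := hb hf
      have h3 : -b ≤ C := le_max_right _ _
      have h4 : a ≤ C := le_max_left _ _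
      omega
    set t : ℕ := C.toNat + 1 with ht
    set j : ℤ := 2 * (t : ℤ) with hjdef
    have hj1 : 1 ≤ j := by
      rw [hjdef, ht]; push_cast; omega
    have hCj : C < 4 * j := by
      have h1 := Int.self_le_toNat C
      rw [hjdef, ht]; push_cast; omega
    have hx : (4 * j ^ 2 + 4 * j + 4 : ℤ) ∈ Mset + Mset := by
      rw [Set.mem_add]
      refine ⟨(2 * ((t * (2 * t + 1) + 1 : ℕ) : ℤ)) ^ 2, Or.inl ⟨t * (2 * t + 1) + 1, rfl⟩,
        -(2 * ((t * (2 * t + 1) : ℕ) : ℤ)) ^ 2,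
        Or.inr ⟨t * (2 * t + 1),
          Nat.one_le_iff_ne_zero.mpr (Nat.mul_ne_zero (by omega) (by omega)), rfl⟩,
        by rw [hjdef]; push_cast; ring⟩
    obtain ⟨m, hm, f, hf, hmf⟩ := Set.mem_add.mp (hsub hx)
    obtain ⟨hf1, hf2⟩ := hFC f hf
    rcases hm with ⟨i, hi⟩ | ⟨i, hi1, hi⟩
    · have hi0 : (0 : ℤ) ≤ (i : ℤ) := Int.natCast_nonneg i
      rcases le_or_gt (i : ℤ) j with h | h
      · nlinarith [mul_nonneg (sub_nonneg.mpr h) (by linarith : (0:ℤ) ≤ (i:ℤ) + j)]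
      · have h' : j + 1 ≤ (i : ℤ) := h
        nlinarith [mul_nonneg (sub_nonneg.mpr h') (by linarith : (0:ℤ) ≤ (i:ℤ) + j + 1)]
    · nlinarith [sq_nonneg ((i : ℤ)), sq_nonneg j]
  · -- LamSet is an approximate subgroup
    refine ⟨?_, Or.inr (Or.inl ⟨0, by norm_num⟩), {0, 1},
      (Set.finite_singleton 1).insert 0, ?_⟩
    · ext x
      simp only [Set.mem_neg]
      constructor
      · rintro (hodd | hM)
        · exact Or.inl (by simpa using hodd.neg)
        · have := Mset_neg_mem _ hM
          exact Or.inr (by simpa using this)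
      · rintro (hodd | hM)
        · exact Or.inl (by simpa using hodd.neg)
        · exact Or.inr (by simpa using Mset_neg_mem _ hM)
    · intro x _
      rw [Set.mem_add]
      rcases Int.even_or_odd x with he | ho
      · obtain ⟨k, hk⟩ := he
        exact ⟨x - 1, Or.inl ⟨k - 1, by omega⟩, 1, by simp, by ring⟩
      · exact ⟨x, Or.inl ho, 0, by simp, by ring⟩
  · -- Evens form an approximate subgroup
    refine ⟨?_, ⟨0, by norm_num⟩, {0}, Set.finite_singleton 0, ?_⟩
    · ext x
      simp [Set.mem_neg, even_neg]
    · intro x hx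
      rw [Set.mem_add] at hx ⊢
      obtain ⟨p, hp, q, hq, rfl⟩ := hx
      exact ⟨p + q, Even.add hp hq, 0, rfl, by ring⟩
  · -- The intersection equals Mset
    ext x
    simp only [Set.mem_inter_iff, LamSet, Set.mem_union, Set.mem_setOf_eq]
    constructor
    · rintro ⟨hodd | hM, heven⟩
      · exact absurd heven (Int.not_even_iff_odd.mpr hodd)
      · exact hM
    · intro hM
      exact ⟨Or.inr hM, Mset_even _ hM⟩
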